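/- Let c and d be integers and define f : ℤ → ℤ by f(k) = d·k + c. Then gcd{ k·f(k) : k ∈ ℤ } = gcd(d + c, 2d); equivalently, the subgroup of ℤ generated by { k·(d·k + c) : k ∈ ℤ } equals the subgroup generated by { d + c, 2d }. (In the geometric setting, f(k) = χ(kD) = deg(D)·k + (1 − p_a) for a divisor D on a smooth curve of genus p_a, by Riemann–Roch.) -/
import Mathlib


/-- **Curve case, `k·f(k)`.**
For integers `c, d` and `f(k) = d·k + c`, the subgroup of `ℤ` generated by
`{ k·(d·k + c) : k ∈ ℤ }` equals the subgroup generated by `{d + c, 2d}`;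
equivalently `gcd{ k·f(k) : k ∈ ℤ } = gcd(d + c, 2d)`. -/
theorem curve_gcd_mul_self (c d : ℤ) :
    AddSubgroup.closure {x : ℤ | ∃ k : ℤ, x = k * (d * k + c)} =
      AddSubgroup.closure {d + c, 2 * d} := by
  apply le_antisymm
  · rw [AddSubgroup.closure_le]
    rintro x ⟨k, rfl⟩
    have h1 : (d + c) ∈ AddSubgroup.closure ({d + c, 2 * d} : Set ℤ) :=
      AddSubgroup.subset_closure (by simp)
    have h2 : (2 * d) ∈ AddSubgroup.closure ({d + c, 2 * d} : Set ℤ) :=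
      AddSubgroup.subset_closure (by simp)
    obtain ⟨m, hm⟩ : ∃ m : ℤ, k * (k - 1) = 2 * m := by
      rcases Int.even_mul_pred_self k with ⟨m, hm⟩
      exact ⟨m, by linarith⟩
    have : k * (d * k + c) = k • (d + c) + m • (2 * d) := by
      simp only [zsmul_eq_mul]
      push_cast
      linear_combination d * hm
    rw [this]
    exact add_mem (zsmul_mem h1 k) (zsmul_mem h2 m)
  · rw [AddSubgroup.closure_le]
    have hx : ∀ k : ℤ, k * (d * k + c) ∈
        AddSubgroup.closure {x : ℤ | ∃ k : ℤ, x = k * (d * k + c)} :=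
      fun k => AddSubgroup.subset_closure ⟨k, rfl⟩
    rintro x (rfl | rfl)
    · have := hx 1
      simpa using this
    · have h1 := hx 1
      have h2 := hx 2
      have : 2 * d = 2 * (d * 2 + c) - (2 : ℤ) • (1 * (d * 1 + c)) := by
        simp; ring
      rw [this]
      exact sub_mem h2 (zsmul_mem h1 2)
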